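/- Let A be an m × n complex matrix whose columns a_1, …, a_n are unit vectors, and let 0 ≤ μ ≤ 1 satisfy |⟨a_i, a_j⟩| ≤ μ for all i ≠ j. Let N ≥ 1, L ≥ 2, and 0 ≤ D ≤ N, and let P : Fin N × Fin L → Fin n be a pattern matrix such that for all distinct column indices i ≠ i' in Fin L, the number of rows s ∈ Fin N with P(s, i) = P(s, i') is at most D. Define, for each i ∈ Fin L, the vector c_i : Fin N × Fin m → ℂ by c_i(s, r) = (1/√N)·A(r, P(s, i)). Then each c_i is a unit vector, and for all i ≠ i', |⟨c_i, c_{i'}⟩| ≤ (D + (N − D)·μ)/N; in particular, the coherence of the family (c_i)_{i ∈ Fin L} is at most (D + (N − D)·μ)/N. -/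

import Mathlib

open scoped ComplexInnerProductSpace

theorem stmt8 (m n N L D : ℕ) (hN : 1 ≤ N) (hL : 2 ≤ L) (hD : D ≤ N)
    (μ : ℝ) (hμ0 : 0 ≤ μ) (hμ1 : μ ≤ 1)
    (a : Fin n → EuclideanSpace ℂ (Fin m))
    (ha : ∀ j, ‖a j‖ = 1)
    (hcoh : ∀ i j : Fin n, i ≠ j → ‖⟪a i, a j⟫‖ ≤ μ)
    (P : Fin N → Fin L → Fin n)
    (hP : ∀ i i' : Fin L, i ≠ i' →
      (Finset.univ.filter fun s : Fin N => P s i = P s i').card ≤ D)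
    (c : Fin L → EuclideanSpace ℂ (Fin N × Fin m))
    (hc : ∀ i, c i = WithLp.toLp 2 (fun sr : Fin N × Fin m => ((1 / Real.sqrt N : ℝ) : ℂ) * a (P sr.1 i) sr.2)) :
    (∀ i, ‖c i‖ = 1) ∧
    ∀ i i' : Fin L, i ≠ i' →
      ‖⟪c i, c i'⟫‖ ≤ ((D : ℝ) + ((N : ℝ) - D) * μ) / N := by
  have hN0 : (0:ℝ) < N := by exact_mod_cast hN
  have key : ∀ i i' : Fin L,
      ⟪c i, c i'⟫ = ((N:ℂ))⁻¹ * ∑ s : Fin N, ⟪a (P s i), a (P s i')⟫ := by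
    intro i i'
    have hconst : ((1 / Real.sqrt N : ℝ) : ℂ) * ((1 / Real.sqrt N : ℝ) : ℂ) = ((N:ℂ))⁻¹ := by
      rw [← Complex.ofReal_mul]
      rw [div_mul_div_comm, one_mul, Real.mul_self_sqrt hN0.le]
      push_cast
      rw [one_div]
    simp only [PiLp.inner_apply, RCLike.inner_apply, hc, PiLp.toLp_apply]
    rw [Fintype.sum_prod_type, Finset.mul_sum]
    refine Finset.sum_congr rfl fun s _ => ?_
    rw [Finset.mul_sum]
    refine Finset.sum_congr rfl fun r _ => ?_
    simp only [map_mul, Complex.conj_ofReal]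
    ring_nf
    rw [← hconst]
    ring
  have hself : ∀ (j : Fin n), ⟪a j, a j⟫ = (1 : ℂ) := by
    intro j
    rw [inner_self_eq_norm_sq_to_K, ha j]
    norm_num
  constructor
  · intro i
    have h1 : (⟪c i, c i⟫ : ℂ) = 1 := by
      rw [key i i]
      simp [hself, Finset.card_univ]
      simp only [ha, one_pow, Complex.ofReal_one, Finset.sum_const, Finset.card_univ, Fintype.card_fin, nsmul_eq_mul, mul_one]
      refine inv_mul_cancel₀ ?_
      exact_mod_cast hN0.ne'
    have h2 : (⟪c i, c i⟫ : ℂ) = ((‖c i‖ : ℝ) : ℂ)^2 := inner_self_eq_norm_sq_to_K _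
    rw [h2] at h1
    have : (‖c i‖ : ℝ)^2 = 1 := by exact_mod_cast h1
    nlinarith [norm_nonneg (c i)]
  · intro i i' hii
    rw [key i i']
    rw [norm_mul]
    have hbound : ‖∑ s : Fin N, ⟪a (P s i), a (P s i')⟫‖ ≤ (D : ℝ) + ((N:ℝ) - D) * μ := by
      calc ‖∑ s : Fin N, ⟪a (P s i), a (P s i')⟫‖
          ≤ ∑ s : Fin N, ‖⟪a (P s i), a (P s i')⟫‖ := norm_sum_le _ _
        _ ≤ (D : ℝ) + ((N:ℝ) - D) * μ := by
            rw [← Finset.sum_filter_add_sum_filter_not Finset.univ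
              (fun s : Fin N => P s i = P s i')]
            set k := (Finset.univ.filter fun s : Fin N => P s i = P s i').card with hk
            have hkD : k ≤ D := hP i i' hii
            have hkN : k ≤ N := by
              calc k ≤ (Finset.univ : Finset (Fin N)).card := Finset.card_filter_le _ _
                _ = N := by simp
            have h1 : ∑ s ∈ Finset.univ.filter (fun s : Fin N => P s i = P s i'),
                ‖⟪a (P s i), a (P s i')⟫‖ ≤ (k : ℝ) := by
              calc ∑ s ∈ Finset.univ.filter (fun s : Fin N => P s i = P s i'),
                  ‖⟪a (P s i), a (P s i')⟫‖
                  ≤ ∑ _s ∈ Finset.univ.filter (fun s : Fin N => P s i = P s i'), (1:ℝ) := by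
                    refine Finset.sum_le_sum fun s hs => ?_
                    rw [Finset.mem_filter] at hs
                    rw [hs.2, hself]
                    simp
                _ = (k : ℝ) := by simp [hk]
            have h2 : ∑ s ∈ Finset.univ.filter (fun s : Fin N => ¬ P s i = P s i'),
                ‖⟪a (P s i), a (P s i')⟫‖ ≤ ((N:ℝ) - k) * μ := by
              calc ∑ s ∈ Finset.univ.filter (fun s : Fin N => ¬ P s i = P s i'),
                  ‖⟪a (P s i), a (P s i')⟫‖
                  ≤ ∑ _s ∈ Finset.univ.filter (fun s : Fin N => ¬ P s i = P s i'), μ := by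
                    refine Finset.sum_le_sum fun s hs => ?_
                    rw [Finset.mem_filter] at hs
                    exact hcoh _ _ hs.2
                _ = ((Finset.univ.filter fun s : Fin N => ¬ P s i = P s i').card : ℝ) * μ := by
                    simp [Finset.sum_const, nsmul_eq_mul]
                _ = ((N:ℝ) - k) * μ := by
                    rw [Finset.filter_not, Finset.card_sdiff_of_subset (Finset.filter_subset _ _)]
                    simp only [Finset.card_univ, Fintype.card_fin]
                    rw [Nat.cast_sub hkN]
            have hcast : (k:ℝ) ≤ D := by exact_mod_cast hkD
            have hcastN : (k:ℝ) ≤ N := by exact_mod_cast hkN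
            nlinarith
    have hnorm : ‖((N:ℂ))⁻¹‖ = (N:ℝ)⁻¹ := by
      rw [norm_inv, Complex.norm_natCast]
    rw [hnorm, div_eq_inv_mul]
    have : (0:ℝ) ≤ (N:ℝ)⁻¹ := by positivity
    exact mul_le_mul_of_nonneg_left hbound this
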